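/- Kashiwara's equivalence for a point in the line: over a field k of characteristic zero, the functor from k-vector spaces to left A_1-modules sending V to k[∂] ⊗_k V (with ∂ acting by multiplication and x by −d/d∂) is fully faithful, and its essential image consists exactly of those A_1-modules M on which every element is annihilated by a power of x. -/

import Mathlib

open TensorProduct

/-- The action of `∂` on `k[∂] ⊗ V`: multiplication by `∂` on the left factor. -/
noncomputable def deltaAct (k : Type) [Field k] (V : Type) [AddCommGroup V] [Module k V] :
    Polynomial k ⊗[k] V →ₗ[k] Polynomial k ⊗[k] V :=
  LinearMap.rTensor V (LinearMap.mulLeft k Polynomial.X)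

/-- The action of `x` on `k[∂] ⊗ V`: `-d/d∂` on the left factor. -/
noncomputable def xAct (k : Type) [Field k] (V : Type) [AddCommGroup V] [Module k V] :
    Polynomial k ⊗[k] V →ₗ[k] Polynomial k ⊗[k] V :=
  LinearMap.rTensor V (-(Polynomial.derivative : Polynomial k →ₗ[k] Polynomial k))

noncomputable def pEquiv (k : Type) [Field k] : Polynomial k ≃ₗ[k] (ℕ →₀ k) where
  toFun p := p.toFinsupp.coeff
  invFun f := Polynomial.ofFinsupp (AddMonoidAlgebra.ofCoeff f)
  map_add' p q := by rw [Polynomial.toFinsupp_add]; rfl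
  map_smul' c p := by rw [Polynomial.toFinsupp_smul]; rfl
  left_inv p := by cases p; rfl
  right_inv f := rfl

noncomputable def eT (k : Type) [Field k] (V : Type) [AddCommGroup V] [Module k V] :
    Polynomial k ⊗[k] V ≃ₗ[k] (ℕ →₀ V) :=
  (TensorProduct.congr (pEquiv k) (LinearEquiv.refl k V)).trans (finsuppScalarLeft k V ℕ)

lemma eT_tmul_apply (k : Type) [Field k] (V : Type) [AddCommGroup V] [Module k V]
    (p : Polynomial k) (v : V) (n : ℕ) : eT k V (p ⊗ₜ v) n = p.coeff n • v := by
  simp [eT, pEquiv, Polynomial.coeff]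

noncomputable def Dd (k : Type) [Field k] (V : Type) [AddCommGroup V] [Module k V] :
    (ℕ →₀ V) →ₗ[k] (ℕ →₀ V) := Finsupp.lmapDomain V k (· + 1)

noncomputable def Dx (k : Type) [Field k] (V : Type) [AddCommGroup V] [Module k V] :
    (ℕ →₀ V) →ₗ[k] (ℕ →₀ V) :=
  Finsupp.lsum k fun n => (Finsupp.lsingle (n-1)) ∘ₗ ((-(n:k)) • LinearMap.id)

section
variable {k : Type} [Field k] {V W : Type} [AddCommGroup V] [Module k V]
  [AddCommGroup W] [Module k W]

lemma Dd_single (n : ℕ) (v : V) : Dd k V (Finsupp.single n v) = Finsupp.single (n+1) v := by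
  simp [Dd, Finsupp.mapDomain_single]

lemma Dx_single (n : ℕ) (v : V) :
    Dx k V (Finsupp.single n v) = Finsupp.single (n-1) ((-(n:k)) • v) := by
  simp [Dx]

lemma Dx_apply (h : ℕ →₀ V) (n : ℕ) : Dx k V h n = (-((n+1 : ℕ):k)) • h (n+1) := by
  induction h using Finsupp.induction_linear with
  | zero => simp
  | add f g hf hg => simp [hf, hg, smul_add]
  | single m v =>
      rw [Dx_single]
      rcases m with _ | j
      · simp [Finsupp.single_apply]
      · rcases eq_or_ne j n with rfl | hj
        · simp
        · rw [Finsupp.single_eq_of_ne (by omega), Finsupp.single_eq_of_ne (by omega), smul_zero]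

lemma Dd_apply_succ (h : ℕ →₀ V) (n : ℕ) : Dd k V h (n+1) = h n := by
  have hinj : Function.Injective (· + 1 : ℕ → ℕ) := fun a b h => by simpa using h
  simpa [Dd] using Finsupp.mapDomain_apply hinj h n

lemma Dd_apply_zero (h : ℕ →₀ V) : Dd k V h 0 = 0 := by
  have h0 : (0:ℕ) ∉ Set.range (· + 1 : ℕ → ℕ) := by simp
  simpa [Dd] using Finsupp.mapDomain_notin_range h 0 h0

lemma eT_xAct (t : Polynomial k ⊗[k] V) : eT k V (xAct k V t) = Dx k V (eT k V t) := by
  have : (eT k V).toLinearMap ∘ₗ xAct k V = Dx k V ∘ₗ (eT k V).toLinearMap := by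
    apply TensorProduct.ext'
    intro p v
    ext n
    simp only [LinearMap.comp_apply, LinearEquiv.coe_coe]
    rw [Dx_apply]
    have hx : xAct k V (p ⊗ₜ v) = (-(Polynomial.derivative p)) ⊗ₜ v := rfl
    rw [hx, eT_tmul_apply, eT_tmul_apply]
    rw [Polynomial.coeff_neg, Polynomial.coeff_derivative]
    rw [smul_smul]
    congr 1
    push_cast
    ring
  exact LinearMap.congr_fun this t

lemma eT_deltaAct (t : Polynomial k ⊗[k] V) : eT k V (deltaAct k V t) = Dd k V (eT k V t) := by
  have : (eT k V).toLinearMap ∘ₗ deltaAct k V = Dd k V ∘ₗ (eT k V).toLinearMap := by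
    apply TensorProduct.ext'
    intro p v
    ext n
    simp only [LinearMap.comp_apply, LinearEquiv.coe_coe]
    have hδ : deltaAct k V (p ⊗ₜ v) = (Polynomial.X * p) ⊗ₜ v := rfl
    rw [hδ, eT_tmul_apply]
    rcases n with _ | m
    · rw [Dd_apply_zero]
      simp [Polynomial.mul_coeff_zero]
    · rw [Dd_apply_succ, eT_tmul_apply, Polynomial.coeff_X_mul]
  exact LinearMap.congr_fun this t

lemma eT_lTensor (f : V →ₗ[k] W) (t : Polynomial k ⊗[k] V) :
    eT k W (LinearMap.lTensor (Polynomial k) f t)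
      = Finsupp.mapRange.linearMap f (eT k V t) := by
  have : (eT k W).toLinearMap ∘ₗ LinearMap.lTensor (Polynomial k) f
      = Finsupp.mapRange.linearMap f ∘ₗ (eT k V).toLinearMap := by
    apply TensorProduct.ext'
    intro p v
    ext n
    simp only [LinearMap.comp_apply, LinearEquiv.coe_coe, LinearMap.lTensor_tmul,
      Finsupp.mapRange.linearMap_apply, Finsupp.mapRange_apply]
    rw [eT_tmul_apply, eT_tmul_apply, map_smul]
  exact LinearMap.congr_fun this t

section Mside
variable {k : Type} [Field k] [CharZero k] {M : Type} [AddCommGroup M] [Module k M]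
variable {ξ δ : M →ₗ[k] M}

lemma comm_pow (h1 : ξ * δ = δ * ξ - 1) (n : ℕ) :
    ξ * δ^(n+1) = δ^(n+1) * ξ - (((n+1:ℕ)):k) • δ^n := by
  induction n with
  | zero => simpa using h1
  | succ n ih =>
      have : ξ * δ^(n+2) = (ξ * δ^(n+1)) * δ := by
        rw [pow_succ, ← mul_assoc]
      rw [this, ih, sub_mul, smul_mul_assoc, mul_assoc, h1, mul_sub, mul_one, ← mul_assoc,
        ← pow_succ, ← pow_succ]
      push_cast
      module

lemma xi_delta_pow (h1 : ξ * δ = δ * ξ - 1) {v : M} (hv : ξ v = 0) (n : ℕ) :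
    ξ ((δ^(n+1)) v) = (-(((n+1:ℕ)):k)) • (δ^n) v := by
  have := LinearMap.congr_fun (comm_pow h1 n) v
  simp only [Module.End.mul_apply, LinearMap.sub_apply, LinearMap.smul_apply] at this
  rw [this, hv, map_zero, zero_sub, neg_smul]

lemma xi_pow_delta_pow (h1 : ξ * δ = δ * ξ - 1) {v : M} (hv : ξ v = 0) (n : ℕ) :
    (ξ^n) ((δ^n) v) = (((-1)^n * (n.factorial) : k)) • v := by
  induction n with
  | zero => simp
  | succ n ih =>
      have h2 : (ξ^(n+1)) ((δ^(n+1)) v) = (ξ^n) (ξ ((δ^(n+1)) v)) := by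
        rw [pow_succ]
        simp [Module.End.mul_apply]
      rw [h2, xi_delta_pow h1 hv, map_smul, ih, smul_smul]
      congr 1
      push_cast [Nat.factorial_succ]
      ring

lemma xi_pow_delta_pow_zero (h1 : ξ * δ = δ * ξ - 1) {v : M} (hv : ξ v = 0) {n N : ℕ}
    (hn : n < N) : (ξ^N) ((δ^n) v) = 0 := by
  have key : (ξ^(n+1)) ((δ^n) v) = 0 := by
    have : (ξ^(n+1)) ((δ^n) v) = ξ ((ξ^n) ((δ^n) v)) := by
      rw [pow_succ']
      simp [Module.End.mul_apply]
    rw [this, xi_pow_delta_pow h1 hv, map_smul, hv, smul_zero]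
  have hN : N = (N - (n+1)) + (n+1) := by omega
  rw [hN, pow_add]
  simp [Module.End.mul_apply, key]

end Mside

section Psi
variable {k : Type} [Field k] [CharZero k] {M : Type} [AddCommGroup M] [Module k M]

noncomputable def psi (ξ δ : M →ₗ[k] M) : (ℕ →₀ (LinearMap.ker ξ)) →ₗ[k] M :=
  Finsupp.lsum k fun n => (δ^n) ∘ₗ (LinearMap.ker ξ).subtype

variable {ξ δ : M →ₗ[k] M}

lemma psi_single (n : ℕ) (v : LinearMap.ker ξ) :
    psi ξ δ (Finsupp.single n v) = (δ^n) (v : M) := by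
  simp [psi]

lemma psi_Dd (f : ℕ →₀ (LinearMap.ker ξ)) : psi ξ δ (Dd k _ f) = δ (psi ξ δ f) := by
  induction f using Finsupp.induction_linear with
  | zero => simp
  | add a b ha hb => simp [map_add, ha, hb]
  | single n v =>
      rw [Dd_single, psi_single, psi_single, pow_succ']
      simp [Module.End.mul_apply]

lemma psi_Dx (h1 : ξ * δ = δ * ξ - 1) (f : ℕ →₀ (LinearMap.ker ξ)) :
    psi ξ δ (Dx k _ f) = ξ (psi ξ δ f) := by
  induction f using Finsupp.induction_linear with
  | zero => simp
  | add a b ha hb => simp [map_add, ha, hb]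
  | single n v =>
      rw [Dx_single, psi_single, psi_single]
      rcases n with _ | m
      · simpa using (LinearMap.mem_ker.mp v.2).symm
      · rw [xi_delta_pow h1 (LinearMap.mem_ker.mp v.2)]
        push_cast
        simp [map_smul]

lemma psi_surj_aux (h1 : ξ * δ = δ * ξ - 1) :
    ∀ n (m : M), (ξ^n) m = 0 → ∃ f, psi ξ δ f = m := by
  intro n
  induction n with
  | zero => intro m hm; exact ⟨0, by simpa using hm.symm⟩
  | succ n ih =>
      intro m hm
      set u := (ξ^n) m with hu
      have hu0 : ξ u = 0 := by
        rw [hu, ← Module.End.mul_apply, ← pow_succ']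
        exact hm
      have hne : ((-1)^n * (n.factorial) : k) ≠ 0 :=
        mul_ne_zero (pow_ne_zero _ (by norm_num)) (Nat.cast_ne_zero.2 n.factorial_ne_zero)
      set c := (((-1)^n * (n.factorial) : k))⁻¹ with hc
      have h2 : (ξ^n) (m - c • (δ^n) u) = 0 := by
        rw [map_sub, map_smul, xi_pow_delta_pow h1 hu0, smul_smul, inv_mul_cancel₀ hne,
          one_smul, sub_self]
      obtain ⟨f, hf⟩ := ih _ h2
      refine ⟨f + Finsupp.single n (c • ⟨u, LinearMap.mem_ker.mpr hu0⟩), ?_⟩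
      rw [map_add, hf, psi_single]
      simp only [SetLike.val_smul, map_smul]
      abel

lemma psi_zero_of (h1 : ξ * δ = δ * ξ - 1) (f : ℕ →₀ (LinearMap.ker ξ))
    (hf : psi ξ δ f = 0) : f = 0 := by
  by_contra hf0
  set N := f.support.max' (Finsupp.support_nonempty_iff.2 hf0) with hN
  have hNmem : N ∈ f.support := Finset.max'_mem _ _
  have hsum : psi ξ δ f = ∑ n ∈ f.support, (δ^n) ((f n : M)) := by
    rw [psi, Finsupp.lsum_apply]
    rfl
  have h0 : (0 : M) = (ξ^N) (psi ξ δ f) := by rw [hf, map_zero]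
  rw [hsum, map_sum] at h0
  rw [Finset.sum_eq_single_of_mem N hNmem (fun n hn hne => by
    have hlt : n < N := lt_of_le_of_ne (Finset.le_max' _ _ hn) hne
    exact xi_pow_delta_pow_zero h1 (LinearMap.mem_ker.mp (f n).2) hlt)] at h0
  rw [xi_pow_delta_pow h1 (LinearMap.mem_ker.mp (f N).2)] at h0
  have hne : ((-1)^N * (N.factorial) : k) ≠ 0 :=
    mul_ne_zero (pow_ne_zero _ (by norm_num)) (Nat.cast_ne_zero.2 N.factorial_ne_zero)
  have : (f N : M) = 0 := by
    rcases smul_eq_zero.mp h0.symm with h | h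
    · exact absurd h hne
    · exact h
  exact (Finsupp.mem_support_iff.mp hNmem) (by exact_mod_cast Subtype.ext this)

lemma psi_bij (h1 : ξ * δ = δ * ξ - 1) (hnil : ∀ m : M, ∃ n, (ξ^n) m = 0) :
    Function.Bijective (psi ξ δ) := by
  constructor
  · intro a b hab
    have : psi ξ δ (a - b) = 0 := by rw [map_sub, hab, sub_self]
    have := psi_zero_of h1 _ this
    exact sub_eq_zero.mp this
  · intro m
    obtain ⟨n, hn⟩ := hnil m
    exact psi_surj_aux h1 n m hn

end Psi

lemma eT_one_tmul {k : Type} [Field k] {V : Type} [AddCommGroup V] [Module k V] (v : V) :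
    eT k V ((1 : Polynomial k) ⊗ₜ v) = Finsupp.single 0 v := by
  ext n
  rw [eT_tmul_apply, Polynomial.coeff_one]
  rcases n with _ | m
  · simp
  · simp [Finsupp.single_apply]


/- STATEMENT 13: Kashiwara's equivalence for a point in the line.  The functor
V ↦ k[∂] ⊗ V (with ∂ acting by multiplication and x by -d/d∂) from k-vector
spaces to A₁-modules is fully faithful: every k-linear map of the tensor
products commuting with both actions comes from a unique linear map V → W.
Its essential image consists exactly of the x-power-torsion modules: any
module M with operators ξ (= x) and δ (= ∂) satisfying the Weyl relation
δξ - ξδ = 1, on which every element is killed by a power of ξ, is isomorphic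
to k[∂] ⊗ ker ξ compatibly with the two actions. -/
theorem kashiwara_point_in_line (k : Type) [Field k] [CharZero k] :
    (∀ (V W : Type) [AddCommGroup V] [Module k V] [AddCommGroup W] [Module k W]
        (g : Polynomial k ⊗[k] V →ₗ[k] Polynomial k ⊗[k] W),
      g ∘ₗ xAct k V = xAct k W ∘ₗ g →
      g ∘ₗ deltaAct k V = deltaAct k W ∘ₗ g →
      ∃! f : V →ₗ[k] W, g = LinearMap.lTensor (Polynomial k) f) ∧
    (∀ (M : Type) [AddCommGroup M] [Module k M] (ξ δ : M →ₗ[k] M),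
      δ ∘ₗ ξ - ξ ∘ₗ δ = LinearMap.id →
      (∀ m : M, ∃ n : ℕ, (ξ ^ n) m = 0) →
      ∃ e : M ≃ₗ[k] Polynomial k ⊗[k] (LinearMap.ker ξ),
        (∀ m, e (ξ m) = xAct k (LinearMap.ker ξ) (e m)) ∧
        (∀ m, e (δ m) = deltaAct k (LinearMap.ker ξ) (e m))) := by
  constructor
  · intro V W _ _ _ _ g hx hd
    set G : (ℕ →₀ V) →ₗ[k] (ℕ →₀ W) :=
      (eT k W).toLinearMap ∘ₗ g ∘ₗ (eT k V).symm.toLinearMap with hG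
    have hsymm_x : ∀ (h : ℕ →₀ V), (eT k V).symm (Dx k V h) = xAct k V ((eT k V).symm h) := by
      intro h
      apply (eT k V).injective
      rw [LinearEquiv.apply_symm_apply, eT_xAct, LinearEquiv.apply_symm_apply]
    have hsymm_d : ∀ (h : ℕ →₀ V), (eT k V).symm (Dd k V h) = deltaAct k V ((eT k V).symm h) := by
      intro h
      apply (eT k V).injective
      rw [LinearEquiv.apply_symm_apply, eT_deltaAct, LinearEquiv.apply_symm_apply]
    have hGx : ∀ h, G (Dx k V h) = Dx k W (G h) := by
      intro h
      simp only [hG, LinearMap.comp_apply, LinearEquiv.coe_coe]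
      rw [hsymm_x]
      have := LinearMap.congr_fun hx ((eT k V).symm h)
      simp only [LinearMap.comp_apply] at this
      rw [this, eT_xAct]
    have hGd : ∀ h, G (Dd k V h) = Dd k W (G h) := by
      intro h
      simp only [hG, LinearMap.comp_apply, LinearEquiv.coe_coe]
      rw [hsymm_d]
      have := LinearMap.congr_fun hd ((eT k V).symm h)
      simp only [LinearMap.comp_apply] at this
      rw [this, eT_deltaAct]
    set fL : V →ₗ[k] W := Finsupp.lapply 0 ∘ₗ G ∘ₗ Finsupp.lsingle 0 with hfL
    have hker : ∀ (h : ℕ →₀ W), Dx k W h = 0 → h = Finsupp.single 0 (h 0) := by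
      intro h hh
      ext n
      rcases n with _ | m
      · simp
      · have h0 : Dx k W h m = 0 := by rw [hh]; rfl
        rw [Dx_apply] at h0
        have hne : (-((m+1 : ℕ):k)) ≠ 0 :=
          neg_ne_zero.mpr (Nat.cast_ne_zero.mpr (Nat.succ_ne_zero m))
        rcases smul_eq_zero.mp h0 with hc | hc
        · exact absurd hc hne
        · rw [hc, Finsupp.single_eq_of_ne (by omega)]
    have hsingle : ∀ n (v : V), G (Finsupp.single n v) = Finsupp.single n (fL v) := by
      intro n
      induction n with
      | zero =>
          intro v
          have hz : Dx k W (G (Finsupp.single 0 v)) = 0 := by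
            rw [← hGx, Dx_single]
            simp
          have := hker _ hz
          rw [this]
          rfl
      | succ n ih =>
          intro v
          rw [show (Finsupp.single (n+1) v) = Dd k V (Finsupp.single n v) from
            (Dd_single n v).symm, hGd, ih, Dd_single]
    have hGmap : G = Finsupp.mapRange.linearMap fL := by
      apply Finsupp.lhom_ext
      intro n v
      rw [hsingle]
      simp
    have hval : ∀ (f'' : V →ₗ[k] W), g = LinearMap.lTensor (Polynomial k) f'' →
        ∀ v, f'' v = (eT k W (g ((1 : Polynomial k) ⊗ₜ v))) 0 := by
      intro f'' hf'' v
      rw [hf'', eT_lTensor, eT_one_tmul]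
      simp
    have hgL : g = LinearMap.lTensor (Polynomial k) fL := by
      apply LinearMap.ext
      intro t
      apply (eT k W).injective
      rw [eT_lTensor]
      have : G (eT k V t) = eT k W (g t) := by
        simp [hG]
      rw [← this, hGmap]
    refine ⟨fL, hgL, ?_⟩
    intro f' hf'
    apply LinearMap.ext
    intro v
    rw [hval f' hf' v, ← hval fL hgL v]
  · intro M _ _ ξ δ hrel hnil
    have hrel' : δ * ξ - ξ * δ = 1 := hrel
    have h1 : ξ * δ = δ * ξ - 1 := by
      rw [← hrel']
      exact (sub_sub_cancel _ _).symm
    set Ψ := LinearEquiv.ofBijective (psi ξ δ) (psi_bij h1 hnil) with hΨ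
    refine ⟨Ψ.symm.trans (eT k (LinearMap.ker ξ)).symm, ?_, ?_⟩
    · intro m
      have hm : psi ξ δ (Ψ.symm m) = m := Ψ.apply_symm_apply m
      have h2 : Ψ.symm (ξ m) = Dx k _ (Ψ.symm m) := by
        rw [LinearEquiv.symm_apply_eq]
        show ξ m = psi ξ δ (Dx k _ (Ψ.symm m))
        rw [psi_Dx h1, hm]
      have h3 : (eT k (LinearMap.ker ξ)).symm (Dx k _ (Ψ.symm m))
          = xAct k _ ((eT k (LinearMap.ker ξ)).symm (Ψ.symm m)) := by
        apply (eT k (LinearMap.ker ξ)).injective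
        rw [LinearEquiv.apply_symm_apply, eT_xAct, LinearEquiv.apply_symm_apply]
      simp only [LinearEquiv.trans_apply, h2, h3]
    · intro m
      have hm : psi ξ δ (Ψ.symm m) = m := Ψ.apply_symm_apply m
      have h2 : Ψ.symm (δ m) = Dd k _ (Ψ.symm m) := by
        rw [LinearEquiv.symm_apply_eq]
        show δ m = psi ξ δ (Dd k _ (Ψ.symm m))
        rw [psi_Dd, hm]
      have h3 : (eT k (LinearMap.ker ξ)).symm (Dd k _ (Ψ.symm m))
          = deltaAct k _ ((eT k (LinearMap.ker ξ)).symm (Ψ.symm m)) := by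
        apply (eT k (LinearMap.ker ξ)).injective
        rw [LinearEquiv.apply_symm_apply, eT_deltaAct, LinearEquiv.apply_symm_apply]
      simp only [LinearEquiv.trans_apply, h2, h3]
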